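/- Let λ ∈ (0,1) and φ, ψ : ℝⁿ → [0,∞]. Define the geometric λ-inf-convolution φ ⊡_λ ψ as the function whose strict epigraph equals F((1−λ)F(epi φ) + λF(epi ψ)), where F(x,z) = (x/z, 1/z). Then for every z ∈ ℝⁿ, (φ ⊡_λ ψ)(z) = inf over t ∈ (0,1) and x, y with z = (1−t)x + ty of max{ ((1−t)/(1−λ)) φ(x), (t/λ) ψ(y) }. -/

import Mathlib

open Set Pointwise

def epi {n : ℕ} (φ : (Fin n → ℝ) → ENNReal) : Set ((Fin n → ℝ) × ℝ) :=
  {p | 0 < p.2 ∧ φ p.1 < ENNReal.ofReal p.2}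

noncomputable def Fmap {n : ℕ} (p : (Fin n → ℝ) × ℝ) : (Fin n → ℝ) × ℝ :=
  (p.2⁻¹ • p.1, p.2⁻¹)

/-- Formula for the geometric `λ`-inf-convolution: if `η` is the function with
strict epigraph `F((1-λ)F(epi φ) + λF(epi ψ))`, then
`η z = inf_{t ∈ (0,1), z=(1-t)x+ty} max{((1-t)/(1-λ))φ(x), (t/λ)ψ(y)}`. -/
theorem ginf_formula (n : ℕ) (l : ℝ) (hl : l ∈ Set.Ioo (0 : ℝ) 1)
    (φ ψ η : (Fin n → ℝ) → ENNReal)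
    (hη : epi η = Fmap '' ((1 - l) • (Fmap '' epi φ) + l • (Fmap '' epi ψ))) :
    ∀ z : Fin n → ℝ,
      η z = ⨅ (t : ℝ) (_ : t ∈ Set.Ioo (0 : ℝ) 1) (x : Fin n → ℝ) (y : Fin n → ℝ)
        (_ : z = (1 - t) • x + t • y),
        max (ENNReal.ofReal ((1 - t) / (1 - l)) * φ x)
            (ENNReal.ofReal (t / l) * ψ y) := by
  obtain ⟨hl0, hl1⟩ := hl
  have hl1' : (0:ℝ) < 1 - l := by linarith
  intro z
  have key : ∀ c : ℝ, ((z, c) ∈ epi η ↔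
      ∃ t ∈ Set.Ioo (0:ℝ) 1, ∃ x y, z = (1 - t) • x + t • y ∧
        max (ENNReal.ofReal ((1 - t) / (1 - l)) * φ x)
            (ENNReal.ofReal (t / l) * ψ y) < ENNReal.ofReal c) := by
    intro c
    rw [hη]
    constructor
    · rintro ⟨q, hq, hFq⟩
      rw [Set.mem_add] at hq
      obtain ⟨a, ha, b, hb, hab⟩ := hq
      obtain ⟨a', ha', rfl⟩ := ha
      obtain ⟨⟨x, s⟩, hxs, rfl⟩ := ha'
      obtain ⟨b', hb', rfl⟩ := hb
      obtain ⟨⟨y, r⟩, hyr, rfl⟩ := hb'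
      obtain ⟨hs, hφ⟩ := hxs
      obtain ⟨hr, hψ⟩ := hyr
      simp only at hs hr hφ hψ
      subst hab
      set w : ℝ := (1 - l) * s⁻¹ + l * r⁻¹ with hw_def
      have hw : 0 < w := by positivity
      have hs0 : s ≠ 0 := ne_of_gt hs
      have hr0 : r ≠ 0 := ne_of_gt hr
      have hw0 : w ≠ 0 := ne_of_gt hw
      have hl0' : l ≠ 0 := ne_of_gt hl0
      have hl1'' : (1:ℝ) - l ≠ 0 := ne_of_gt hl1'
      have hq2 : ((1 - l) • Fmap (x, s) + l • Fmap (y, r)).2 = w := by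
        simp [Fmap, smul_eq_mul, hw_def]
      have hq1 : ((1 - l) • Fmap (x, s) + l • Fmap (y, r)).1
          = (1 - l) • s⁻¹ • x + l • r⁻¹ • y := by
        simp [Fmap]
      have hz : w⁻¹ • ((1 - l) • s⁻¹ • x + l • r⁻¹ • y) = z := by
        have := congrArg Prod.fst hFq
        simpa [Fmap, hq1, hq2] using this
      have hc : w⁻¹ = c := by
        have := congrArg Prod.snd hFq
        simpa [Fmap, hq2] using this
      refine ⟨l * r⁻¹ * w⁻¹, ⟨by positivity, ?_⟩, x, y, ?_, ?_⟩
      · have h1 : l * r⁻¹ < w := by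
          have : (0:ℝ) < (1 - l) * s⁻¹ := by positivity
          rw [hw_def]; linarith
        have := (div_lt_one hw).mpr h1
        rwa [div_eq_mul_inv] at this
      · rw [← hz]
        ext i
        simp only [Pi.add_apply, Pi.smul_apply, smul_eq_mul, hw_def]
        field_simp
        ring
      · rw [← hc]
        have h1t : 1 - l * r⁻¹ * w⁻¹ = (1 - l) * s⁻¹ * w⁻¹ := by
          rw [hw_def]
          field_simp
          ring
        refine max_lt ?_ ?_
        · have he : (1 - l * r⁻¹ * w⁻¹) / (1 - l) = s⁻¹ * w⁻¹ := by
            rw [h1t]; field_simp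
          rw [he]
          calc ENNReal.ofReal (s⁻¹ * w⁻¹) * φ x
              < ENNReal.ofReal (s⁻¹ * w⁻¹) * ENNReal.ofReal s := by
                refine (ENNReal.mul_lt_mul_iff_right ?_ ?_).mpr hφ
                · simp [ENNReal.ofReal_pos.mpr (by positivity : (0:ℝ) < s⁻¹ * w⁻¹)]
                  positivity
                · exact ENNReal.ofReal_ne_top
            _ = ENNReal.ofReal w⁻¹ := by
                rw [← ENNReal.ofReal_mul (by positivity)]
                congr 1
                field_simp
        · have he : l * r⁻¹ * w⁻¹ / l = r⁻¹ * w⁻¹ := by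
            field_simp
          rw [he]
          calc ENNReal.ofReal (r⁻¹ * w⁻¹) * ψ y
              < ENNReal.ofReal (r⁻¹ * w⁻¹) * ENNReal.ofReal r := by
                refine (ENNReal.mul_lt_mul_iff_right ?_ ?_).mpr hψ
                · simp [ENNReal.ofReal_pos.mpr (by positivity : (0:ℝ) < r⁻¹ * w⁻¹)]
                  positivity
                · exact ENNReal.ofReal_ne_top
            _ = ENNReal.ofReal w⁻¹ := by
                rw [← ENNReal.ofReal_mul (by positivity)]
                congr 1
                field_simp
    · rintro ⟨t, ⟨ht0, ht1⟩, x, y, hz, hM⟩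
      have ht1' : (0:ℝ) < 1 - t := by linarith
      have hc : 0 < c := by
        have h0 : (0:ENNReal) < ENNReal.ofReal c := lt_of_le_of_lt zero_le hM
        exact ENNReal.ofReal_pos.mp h0
      obtain ⟨hM1, hM2⟩ := max_lt_iff.mp hM
      set s : ℝ := c * (1 - l) / (1 - t) with hs_def
      set r : ℝ := c * l / t with hr_def
      have hs : 0 < s := by positivity
      have hr : 0 < r := by positivity
      have hs0 : s ≠ 0 := ne_of_gt hs
      have hr0 : r ≠ 0 := ne_of_gt hr
      have hc0 : c ≠ 0 := ne_of_gt hc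
      have ht0' : t ≠ 0 := ne_of_gt ht0
      have ht1'' : (1:ℝ) - t ≠ 0 := ne_of_gt ht1'
      have hl0' : l ≠ 0 := ne_of_gt hl0
      have hl1'' : (1:ℝ) - l ≠ 0 := ne_of_gt hl1'
      have hφ : φ x < ENNReal.ofReal s := by
        have h1 : ENNReal.ofReal ((1 - l) / (1 - t)) *
            (ENNReal.ofReal ((1 - t) / (1 - l)) * φ x) = φ x := by
          rw [← mul_assoc, ← ENNReal.ofReal_mul (by positivity)]
          have : (1 - l) / (1 - t) * ((1 - t) / (1 - l)) = 1 := by field_simp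
          rw [this, ENNReal.ofReal_one, one_mul]
        calc φ x = ENNReal.ofReal ((1 - l) / (1 - t)) *
              (ENNReal.ofReal ((1 - t) / (1 - l)) * φ x) := h1.symm
          _ < ENNReal.ofReal ((1 - l) / (1 - t)) * ENNReal.ofReal c := by
              refine (ENNReal.mul_lt_mul_iff_right ?_ ENNReal.ofReal_ne_top).mpr hM1
              simp [ENNReal.ofReal_pos.mpr (by positivity : (0:ℝ) < (1-l)/(1-t))]
              positivity
          _ = ENNReal.ofReal s := by
              rw [← ENNReal.ofReal_mul (by positivity)]
              congr 1
              rw [hs_def]; ring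
      have hψ : ψ y < ENNReal.ofReal r := by
        have h1 : ENNReal.ofReal (l / t) *
            (ENNReal.ofReal (t / l) * ψ y) = ψ y := by
          rw [← mul_assoc, ← ENNReal.ofReal_mul (by positivity)]
          have : l / t * (t / l) = 1 := by field_simp
          rw [this, ENNReal.ofReal_one, one_mul]
        calc ψ y = ENNReal.ofReal (l / t) *
              (ENNReal.ofReal (t / l) * ψ y) := h1.symm
          _ < ENNReal.ofReal (l / t) * ENNReal.ofReal c := by
              refine (ENNReal.mul_lt_mul_iff_right ?_ ENNReal.ofReal_ne_top).mpr hM2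
              simp [ENNReal.ofReal_pos.mpr (by positivity : (0:ℝ) < l/t)]
              positivity
          _ = ENNReal.ofReal r := by
              rw [← ENNReal.ofReal_mul (by positivity)]
              congr 1
              rw [hr_def]; ring
      refine ⟨(1 - l) • Fmap (x, s) + l • Fmap (y, r), ?_, ?_⟩
      · exact Set.add_mem_add
          (Set.smul_mem_smul_set (Set.mem_image_of_mem _ ⟨hs, hφ⟩))
          (Set.smul_mem_smul_set (Set.mem_image_of_mem _ ⟨hr, hψ⟩))
      · have hw2 : ((1 - l) • Fmap (x, s) + l • Fmap (y, r)).2 = c⁻¹ := by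
          simp only [Fmap, Prod.smul_mk, Prod.mk_add_mk, smul_eq_mul]
          rw [hs_def, hr_def]
          field_simp
          ring
        have hw1 : ((1 - l) • Fmap (x, s) + l • Fmap (y, r)).1
            = (1 - l) • s⁻¹ • x + l • r⁻¹ • y := by
          simp [Fmap]
        refine Prod.ext ?_ ?_
        · show ((1 - l) • Fmap (x, s) + l • Fmap (y, r)).2⁻¹ •
            ((1 - l) • Fmap (x, s) + l • Fmap (y, r)).1 = z
          rw [hw2, hw1, inv_inv, hz]
          ext i
          simp only [Pi.add_apply, Pi.smul_apply, smul_eq_mul]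
          rw [hs_def, hr_def]
          field_simp
        · show ((1 - l) • Fmap (x, s) + l • Fmap (y, r)).2⁻¹ = c
          rw [hw2, inv_inv]
  apply le_antisymm
  · simp only [le_iInf_iff]
    intro t ht x y hz
    refine le_of_forall_gt_imp_ge_of_dense fun b hb => ?_
    obtain ⟨r, _, hr1, hr2⟩ := ENNReal.lt_iff_exists_real_btwn.mp hb
    have hmem : (z, r) ∈ epi η := (key r).mpr ⟨t, ht, x, y, hz, hr1⟩
    exact le_trans hmem.2.le hr2.le
  · refine le_of_forall_gt_imp_ge_of_dense fun b hb => ?_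
    obtain ⟨r, _, hr1, hr2⟩ := ENNReal.lt_iff_exists_real_btwn.mp hb
    have hr0 : 0 < r := ENNReal.ofReal_pos.mp (lt_of_le_of_lt zero_le hr1)
    have hmem : (z, r) ∈ epi η := ⟨hr0, hr1⟩
    obtain ⟨t, ht, x, y, hz, hM⟩ := (key r).mp hmem
    calc (⨅ (t : ℝ) (_ : t ∈ Set.Ioo (0 : ℝ) 1) (x : Fin n → ℝ) (y : Fin n → ℝ)
          (_ : z = (1 - t) • x + t • y),
          max (ENNReal.ofReal ((1 - t) / (1 - l)) * φ x)
              (ENNReal.ofReal (t / l) * ψ y))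
        ≤ max (ENNReal.ofReal ((1 - t) / (1 - l)) * φ x)
              (ENNReal.ofReal (t / l) * ψ y) := by
          refine iInf_le_of_le t (iInf_le_of_le ht (iInf_le_of_le x
            (iInf_le_of_le y (iInf_le _ hz))))
      _ ≤ ENNReal.ofReal r := hM.le
      _ ≤ b := hr2.le
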